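/- arXiv:1405.1917 — 5 statements merged into one kernel-verified Lean document; each statement's English description precedes it below -/
import Mathlib

section
/- Let H be a complex Hilbert space, T a bounded linear operator on H with closed range, and S a Moore–Penrose inverse of T. Then range T = range T* if and only if T∘S = S∘T. -/
open ContinuousLinearMap

/-- For a bounded operator `T` with closed range on a complex Hilbert space and a
Moore–Penrose inverse `S` of `T`, one has `range T = range T*` iff `T ∘ S = S ∘ T`. -/
theorem ep_iff_commutes_with_moore_penrose
    {H : Type*} [NormedAddCommGroup H] [InnerProductSpace ℂ H] [CompleteSpace H]
    (T S : H →L[ℂ] H) (hT : IsClosed (LinearMap.range (T : H →ₗ[ℂ] H) : Set H))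
    (h1 : T ∘L S ∘L T = T) (h2 : S ∘L T ∘L S = S)
    (h3 : ContinuousLinearMap.adjoint (T ∘L S) = T ∘L S)
    (h4 : ContinuousLinearMap.adjoint (S ∘L T) = S ∘L T) :
    LinearMap.range (T : H →ₗ[ℂ] H) = LinearMap.range (ContinuousLinearMap.adjoint T : H →ₗ[ℂ] H) ↔
      T ∘L S = S ∘L T := by
  have e1 : ∀ x, T (S (T x)) = T x := fun x => by
    have := ContinuousLinearMap.ext_iff.mp h1 x
    simpa using this
  have e2 : ∀ x, S (T (S x)) = S x := fun x => by
    have := ContinuousLinearMap.ext_iff.mp h2 x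
    simpa using this
  -- range (T ∘L S) = range T
  have hrTS : LinearMap.range (T ∘L S : H →ₗ[ℂ] H) = LinearMap.range (T : H →ₗ[ℂ] H) := by
    apply le_antisymm
    · rintro _ ⟨x, rfl⟩
      exact ⟨S x, rfl⟩
    · rintro _ ⟨x, rfl⟩
      exact ⟨T x, e1 x⟩
  -- T* = (S ∘L T) ∘L T*
  have hTstar : adjoint T = (S ∘L T) ∘L adjoint T := by
    conv_lhs => rw [← h1]
    rw [adjoint_comp, h4]
  have hST : S ∘L T = adjoint T ∘L adjoint S := by
    rw [← h4, adjoint_comp]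
  have hrST : LinearMap.range (S ∘L T : H →ₗ[ℂ] H) = LinearMap.range (adjoint T : H →ₗ[ℂ] H) := by
    apply le_antisymm
    · rintro _ ⟨x, rfl⟩
      exact ⟨adjoint S x, (ContinuousLinearMap.ext_iff.mp hST x).symm⟩
    · rintro _ ⟨x, rfl⟩
      exact ⟨adjoint T x, (ContinuousLinearMap.ext_iff.mp hTstar x).symm⟩
  constructor
  · intro hr
    have hrangeEq : LinearMap.range (T ∘L S : H →ₗ[ℂ] H) = LinearMap.range (S ∘L T : H →ₗ[ℂ] H) := by
      rw [hrTS, hrST, hr]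
    have hPQ : ∀ x, (T ∘L S) ((S ∘L T) x) = (S ∘L T) x := fun x => by
      obtain ⟨y, hy⟩ : (S ∘L T) x ∈ LinearMap.range (T ∘L S : H →ₗ[ℂ] H) := by
        rw [hrangeEq]; exact LinearMap.mem_range_self _ x
      rw [← hy]
      show T (S (T (S y))) = T (S y)
      rw [e2]
    have hQP : ∀ x, (S ∘L T) ((T ∘L S) x) = (T ∘L S) x := fun x => by
      obtain ⟨y, hy⟩ : (T ∘L S) x ∈ LinearMap.range (S ∘L T : H →ₗ[ℂ] H) := by
        rw [← hrangeEq]; exact LinearMap.mem_range_self _ x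
      rw [← hy]
      show S (T (S (T y))) = S (T y)
      rw [e1]
    have hA : T ∘L S = (S ∘L T) ∘L (T ∘L S) :=
      ContinuousLinearMap.ext fun x => (hQP x).symm
    have hB : T ∘L S = (T ∘L S) ∘L (S ∘L T) := by
      calc T ∘L S = adjoint (T ∘L S) := h3.symm
        _ = adjoint ((S ∘L T) ∘L (T ∘L S)) := by rw [← hA]
        _ = adjoint (T ∘L S) ∘L adjoint (S ∘L T) := adjoint_comp _ _
        _ = (T ∘L S) ∘L (S ∘L T) := by rw [h3, h4]
    exact ContinuousLinearMap.ext fun x => by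
      rw [ContinuousLinearMap.ext_iff.mp hB x]; exact hPQ x
  · intro hc
    rw [← hrTS, ← hrST, hc]
end

section
/- Let H be a complex Hilbert space, T a bounded linear operator on H with closed range, and S the Moore–Penrose inverse of T. Then T is EP if and only if there exists a bounded invertible operator V on H (a continuous linear equivalence of H onto itself) such that S = V∘T and S = T∘V. -/
open ContinuousLinearMap

/-- Two self-adjoint idempotents with the same range are equal. -/
private theorem proj_eq_of_range_eq
    {H : Type*} [NormedAddCommGroup H] [InnerProductSpace ℂ H] [CompleteSpace H]
    (P Q : H →L[ℂ] H) (hP : star P = P) (hQ : star Q = Q)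
    (hP2 : P * P = P) (hQ2 : Q * Q = Q)
    (hr : LinearMap.range (P : H →ₗ[ℂ] H) = LinearMap.range (Q : H →ₗ[ℂ] H)) : P = Q := by
  have hQP : Q * P = P := by
    ext x
    obtain ⟨z, hz⟩ : P x ∈ LinearMap.range (Q : H →ₗ[ℂ] H) := hr ▸ LinearMap.mem_range_self _ x
    rw [ContinuousLinearMap.mul_apply, ← (show Q z = P x from hz), ← ContinuousLinearMap.mul_apply, hQ2]
  have hPQ : P * Q = Q := by
    ext x
    obtain ⟨z, hz⟩ : Q x ∈ LinearMap.range (P : H →ₗ[ℂ] H) := hr.symm ▸ LinearMap.mem_range_self _ x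
    rw [ContinuousLinearMap.mul_apply, ← (show P z = Q x from hz), ← ContinuousLinearMap.mul_apply, hP2]
  have h := congrArg star hQP
  rw [star_mul, hP, hQ, hPQ] at h
  exact h.symm

/-- Let `T` be a bounded operator with closed range on a complex Hilbert space and
`S` its Moore–Penrose inverse. Then `T` is EP iff there exists a bounded invertible
operator `V` with `S = V ∘ T` and `S = T ∘ V`. -/
theorem ep_iff_moore_penrose_eq_invertible_comp
    {H : Type*} [NormedAddCommGroup H] [InnerProductSpace ℂ H] [CompleteSpace H]
    (T S : H →L[ℂ] H) (hT : IsClosed (LinearMap.range (T : H →ₗ[ℂ] H) : Set H))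
    (h1 : T ∘L S ∘L T = T) (h2 : S ∘L T ∘L S = S)
    (h3 : ContinuousLinearMap.adjoint (T ∘L S) = T ∘L S)
    (h4 : ContinuousLinearMap.adjoint (S ∘L T) = S ∘L T) :
    LinearMap.range (T : H →ₗ[ℂ] H) = LinearMap.range (ContinuousLinearMap.adjoint T : H →ₗ[ℂ] H) ↔
      ∃ V : H ≃L[ℂ] H, S = (V : H →L[ℂ] H) ∘L T ∧ S = T ∘L (V : H →L[ℂ] H) := by
  -- multiplicative versions of the hypotheses
  have m1 : T * S * T = T := by rw [mul_def, mul_def]; exact h1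
  have m2 : S * T * S = S := by rw [mul_def, mul_def]; exact h2
  have hs3 : star (T * S) = T * S := by rw [mul_def, star_eq_adjoint]; exact h3
  have hs4 : star (S * T) = S * T := by rw [mul_def, star_eq_adjoint]; exact h4
  -- range S ≤ range (adjoint T), purely algebraically
  have hS_le : LinearMap.range (S : H →ₗ[ℂ] H) ≤ LinearMap.range (ContinuousLinearMap.adjoint T : H →ₗ[ℂ] H) := by
    rintro _ ⟨x, rfl⟩
    have e : S = star T * star S * S := by
      conv_lhs => rw [← m2]
      rw [← hs4, star_mul]
    rw [show (S : H →ₗ[ℂ] H) x = (star T * star S * S) x from by rw [← e]; rfl, ContinuousLinearMap.mul_apply, ContinuousLinearMap.mul_apply,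
      star_eq_adjoint]
    exact ⟨_, rfl⟩
  -- range (adjoint T) ≤ range S, purely algebraically
  have hT'_le : LinearMap.range (ContinuousLinearMap.adjoint T : H →ₗ[ℂ] H) ≤ LinearMap.range (S : H →ₗ[ℂ] H) := by
    rintro _ ⟨x, rfl⟩
    have e : star T = S * T * star T := by
      have h' : T * (S * T) = T := by rw [← mul_assoc]; exact m1
      have := congrArg star h'
      rw [star_mul, hs4] at this
      exact this.symm
    rw [← star_eq_adjoint, show ((star T : H →L[ℂ] H) : H →ₗ[ℂ] H) x = (S * T * star T) x from by rw [← e]; rfl,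
      ContinuousLinearMap.mul_apply, ContinuousLinearMap.mul_apply]
    exact ⟨_, rfl⟩
  constructor
  · -- forward: EP implies existence of V
    intro hEP
    set P := T * S with hPdef
    set Q := S * T with hQdef
    have hP2 : P * P = P := by
      rw [hPdef]
      calc T * S * (T * S) = T * S * T * S := by simp only [mul_assoc]
        _ = T * S := by rw [m1]
    have hQ2 : Q * Q = Q := by
      rw [hQdef]
      calc S * T * (S * T) = S * T * S * T := by simp only [mul_assoc]
        _ = S * T := by rw [m2]
    have hrangeP : LinearMap.range (P : H →ₗ[ℂ] H) = LinearMap.range (T : H →ₗ[ℂ] H) := by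
      apply le_antisymm
      · rintro _ ⟨x, rfl⟩; exact ⟨S x, rfl⟩
      · rintro _ ⟨x, rfl⟩
        refine ⟨T x, ?_⟩
        rw [show (P : H →ₗ[ℂ] H) (T x) = (T * S * T) x from rfl, m1]; rfl
    have hrangeQ : LinearMap.range (Q : H →ₗ[ℂ] H) = LinearMap.range (S : H →ₗ[ℂ] H) := by
      apply le_antisymm
      · rintro _ ⟨x, rfl⟩; exact ⟨T x, rfl⟩
      · rintro _ ⟨x, rfl⟩
        refine ⟨S x, ?_⟩
        rw [show (Q : H →ₗ[ℂ] H) (S x) = (S * T * S) x from rfl, m2]; rfl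
    have hrangeS : LinearMap.range (S : H →ₗ[ℂ] H) = LinearMap.range (T : H →ₗ[ℂ] H) :=
      le_antisymm (hS_le.trans (le_of_eq hEP.symm)) (hEP.trans_le hT'_le)
    have hPQ : P = Q :=
      proj_eq_of_range_eq P Q hs3 hs4 hP2 hQ2
        (by rw [hrangeP, hrangeQ, hrangeS])
    -- key relations
    have rPT : P * T = T := m1
    have rSP : S * P = S := by rw [hPdef, ← mul_assoc]; exact m2
    have rST : S * T = P := hPQ.symm
    have rTS : T * S = P := rfl
    have rTP : T * P = T := by rw [hPQ, hQdef, ← mul_assoc]; exact m1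
    have rPS : P * S = S := by rw [hPQ, hQdef]; exact m2
    -- nested versions for simp
    have nPT : ∀ c : H →L[ℂ] H, P * (T * c) = T * c := fun c => by rw [← mul_assoc, rPT]
    have nSP : ∀ c : H →L[ℂ] H, S * (P * c) = S * c := fun c => by rw [← mul_assoc, rSP]
    have nST : ∀ c : H →L[ℂ] H, S * (T * c) = P * c := fun c => by rw [← mul_assoc, rST]
    have nTS : ∀ c : H →L[ℂ] H, T * (S * c) = P * c := fun c => by rw [← mul_assoc, rTS]
    have nTP : ∀ c : H →L[ℂ] H, T * (P * c) = T * c := fun c => by rw [← mul_assoc, rTP]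
    have nPS : ∀ c : H →L[ℂ] H, P * (S * c) = S * c := fun c => by rw [← mul_assoc, rPS]
    have nPP : ∀ c : H →L[ℂ] H, P * (P * c) = P * c := fun c => by rw [← mul_assoc, hP2]
    set V' : H →L[ℂ] H := S * S + (1 - P) with hV'
    set W : H →L[ℂ] H := T * T + (1 - P) with hW
    have hVW : V' * W = 1 := by
      rw [hV', hW]
      simp only [mul_add, add_mul, mul_sub, sub_mul, mul_one, one_mul, mul_assoc,
        nPT, nSP, nST, nTS, nTP, nPS, nPP, rPT, rSP, rST, rTS, rTP, rPS, hP2]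
      abel
    have hWV : W * V' = 1 := by
      rw [hV', hW]
      simp only [mul_add, add_mul, mul_sub, sub_mul, mul_one, one_mul, mul_assoc,
        nPT, nSP, nST, nTS, nTP, nPS, nPP, rPT, rSP, rST, rTS, rTP, rPS, hP2]
      abel
    refine ⟨ContinuousLinearEquiv.ofUnit ⟨V', W, hVW, hWV⟩, ?_, ?_⟩
    · have : (↑(ContinuousLinearEquiv.ofUnit ⟨V', W, hVW, hWV⟩) : H →L[ℂ] H) = V' := rfl
      rw [this, ← mul_def, hV']
      simp only [add_mul, sub_mul, one_mul, mul_assoc, nST, nPT, rST, rPT]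
      simp only [rPS, rST, rPT, rSP, rTP, rTS, add_zero, zero_add, sub_self]
      try abel
    · have : (↑(ContinuousLinearEquiv.ofUnit ⟨V', W, hVW, hWV⟩) : H →L[ℂ] H) = V' := rfl
      rw [this, ← mul_def, hV']
      simp only [mul_add, mul_sub, mul_one, mul_assoc, nTS, nPS, rTS, rTP, rPS]
      simp only [rPS, rST, rPT, rSP, rTP, rTS, add_zero, zero_add, sub_self]
      try abel
  · -- backward: existence of V implies EP
    rintro ⟨V, hVT, hTV⟩
    have hT_le_S : LinearMap.range (T : H →ₗ[ℂ] H) ≤ LinearMap.range (S : H →ₗ[ℂ] H) := by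
      rintro _ ⟨x, rfl⟩
      refine ⟨V.symm x, ?_⟩
      rw [hTV]
      simp
    have hS_le_T : LinearMap.range (S : H →ₗ[ℂ] H) ≤ LinearMap.range (T : H →ₗ[ℂ] H) := by
      rintro _ ⟨x, rfl⟩
      rw [hTV]
      exact ⟨_, rfl⟩
    exact le_antisymm (hT_le_S.trans hS_le) (hT'_le.trans hS_le_T)
end

section
/- Let H be a complex Hilbert space and let T and S be EP operators with closed range on H such that T∘S = S∘T. Then T∘S has closed range and range (T∘S) = range ((T∘S)*), i.e. T∘S is an EP operator with closed range. -/
open ContinuousLinearMap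
open scoped InnerProductSpace

lemma range_comp_eq_inf
    {H : Type*} [NormedAddCommGroup H] [InnerProductSpace ℂ H] [CompleteSpace H]
    (T S : H →L[ℂ] H)
    (hT : IsClosed (LinearMap.range (T : H →ₗ[ℂ] H) : Set H))
    (hTep : LinearMap.range (T : H →ₗ[ℂ] H) = LinearMap.range ((ContinuousLinearMap.adjoint T : H →L[ℂ] H) : H →ₗ[ℂ] H))
    (hcomm : T ∘L S = S ∘L T) :
    LinearMap.range ((T ∘L S : H →L[ℂ] H) : H →ₗ[ℂ] H) = LinearMap.range (T : H →ₗ[ℂ] H) ⊓ LinearMap.range (S : H →ₗ[ℂ] H) := by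
  haveI : CompleteSpace (LinearMap.range (T : H →ₗ[ℂ] H)) := hT.completeSpace_coe
  apply le_antisymm
  · rintro _ ⟨x, rfl⟩
    refine ⟨⟨S x, rfl⟩, ?_⟩
    have : (T ∘L S) x = (S ∘L T) x := by rw [hcomm]
    simp only [comp_apply] at this ⊢
    exact ⟨T x, this.symm⟩
  · rintro y ⟨hy, u, rfl⟩
    -- decompose u
    obtain ⟨u₁, hu₁, u₂, hu₂, rfl⟩ := (LinearMap.range (T : H →ₗ[ℂ] H)).exists_add_mem_mem_orthogonal u
    obtain ⟨v, rfl⟩ := hu₁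
    -- u₂ ∈ ker T
    have hker : ∀ x ∈ (LinearMap.range (T : H →ₗ[ℂ] H))ᗮ, T x = 0 := by
      intro x hx
      have h2 : ContinuousLinearMap.adjoint T (T x) ∈ LinearMap.range (T : H →ₗ[ℂ] H) := by
        rw [hTep]; exact ⟨T x, rfl⟩
      rw [Submodule.mem_orthogonal] at hx
      have := hx _ h2
      rw [ContinuousLinearMap.adjoint_inner_left] at this
      exact inner_self_eq_zero.mp this
    have hTu₂ : T u₂ = 0 := hker u₂ hu₂
    have hSu₂ker : T (S u₂) = 0 := by
      have : (T ∘L S) u₂ = (S ∘L T) u₂ := by rw [hcomm]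
      simp only [comp_apply, hTu₂, map_zero] at this
      exact this
    -- S u₂ ∈ (range T)ᗮ as well? No: S u₂ ∈ ker T, and we show S u₂ = S u - S T v ∈ range T too... 
    have hSTv : S (T v) ∈ LinearMap.range (T : H →ₗ[ℂ] H) := by
      have : (S ∘L T) v = (T ∘L S) v := by rw [hcomm]
      simp only [comp_apply] at this
      exact this ▸ ⟨S v, rfl⟩
    have hy' : S (T v + u₂) ∈ LinearMap.range (T : H →ₗ[ℂ] H) := hy
    have hSu₂mem : S u₂ ∈ LinearMap.range (T : H →ₗ[ℂ] H) := by
      have : S u₂ = S (T v + u₂) - S (T v) := by rw [map_add]; abel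
      rw [this]
      exact Submodule.sub_mem _ hy' hSTv
    -- S u₂ ∈ range T and T (S u₂) = 0; but also S u₂ ⊥ ... use: range T ∩ ker T = 0
    -- S u₂ ∈ range T = range T†, so S u₂ = T† w, and ⟪S u₂, S u₂⟫ = ⟪T† w, S u₂⟫ = ⟪w, T (S u₂)⟫ = 0
    have hSu₂ : S u₂ = 0 := by
      rw [hTep] at hSu₂mem
      obtain ⟨w, hw⟩ := hSu₂mem
      have : (⟪S u₂, S u₂⟫_ℂ : ℂ) = ⟪w, T (S u₂)⟫_ℂ := by
        rw [← hw]; exact ContinuousLinearMap.adjoint_inner_left _ _ _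
      rw [hSu₂ker, inner_zero_right] at this
      exact inner_self_eq_zero.mp this
    refine ⟨v, ?_⟩
    have hc : (T ∘L S) v = (S ∘L T) v := by rw [hcomm]
    simp only [comp_apply, ContinuousLinearMap.coe_coe] at hc ⊢
    rw [hc, map_add, hSu₂, add_zero]

/-- The product of two commuting EP operators with closed range on a complex Hilbert
space is an EP operator with closed range. -/
theorem ep_comp_of_commuting_ep
    {H : Type*} [NormedAddCommGroup H] [InnerProductSpace ℂ H] [CompleteSpace H]
    (T S : H →L[ℂ] H)
    (hT : IsClosed (LinearMap.range ((T : H →L[ℂ] H) : H →ₗ[ℂ] H) : Set H))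
    (hTep : LinearMap.range ((T : H →L[ℂ] H) : H →ₗ[ℂ] H) = LinearMap.range ((ContinuousLinearMap.adjoint T : H →L[ℂ] H) : H →ₗ[ℂ] H))
    (hS : IsClosed (LinearMap.range ((S : H →L[ℂ] H) : H →ₗ[ℂ] H) : Set H))
    (hSep : LinearMap.range ((S : H →L[ℂ] H) : H →ₗ[ℂ] H) = LinearMap.range ((ContinuousLinearMap.adjoint S : H →L[ℂ] H) : H →ₗ[ℂ] H))
    (hcomm : T ∘L S = S ∘L T) :
    IsClosed (LinearMap.range ((T ∘L S : H →L[ℂ] H) : H →ₗ[ℂ] H) : Set H) ∧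
      LinearMap.range ((T ∘L S : H →L[ℂ] H) : H →ₗ[ℂ] H) =
        LinearMap.range ((ContinuousLinearMap.adjoint (T ∘L S) : H →L[ℂ] H) : H →ₗ[ℂ] H) := by
  have hrange := range_comp_eq_inf T S hT hTep hcomm
  -- adjoints commute
  have hcomm' : ContinuousLinearMap.adjoint S ∘L ContinuousLinearMap.adjoint T
      = ContinuousLinearMap.adjoint T ∘L ContinuousLinearMap.adjoint S := by
    rw [← ContinuousLinearMap.adjoint_comp, ← ContinuousLinearMap.adjoint_comp, hcomm]
  have hT' : IsClosed ((LinearMap.range ((ContinuousLinearMap.adjoint T : H →L[ℂ] H) : H →ₗ[ℂ] H) : Submodule ℂ H) : Set H) := by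
    rw [← hTep]; exact hT
  have hTep' : LinearMap.range ((ContinuousLinearMap.adjoint T : H →L[ℂ] H) : H →ₗ[ℂ] H)
      = LinearMap.range ((ContinuousLinearMap.adjoint (ContinuousLinearMap.adjoint T) : H →L[ℂ] H) : H →ₗ[ℂ] H) := by
    rw [ContinuousLinearMap.adjoint_adjoint, ← hTep]
  have hrange' := range_comp_eq_inf (ContinuousLinearMap.adjoint T)
    (ContinuousLinearMap.adjoint S) hT' hTep' hcomm'.symm
  have hadj : ContinuousLinearMap.adjoint (T ∘L S)
      = ContinuousLinearMap.adjoint T ∘L ContinuousLinearMap.adjoint S := by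
    rw [ContinuousLinearMap.adjoint_comp, hcomm']
  constructor
  · rw [hrange, Submodule.coe_inf]
    exact hT.inter hS
  · rw [hrange, hadj, hrange', ← hTep, ← hSep]
end

section
/- Let H be a complex Hilbert space and let T, S and T∘S all be EP operators with closed range on H. Then T maps range S into range S, and S* maps range T into range T; that is, the image of range S under T is contained in range S, and the image of range T under S* is contained in range T. -/
/-- If `T`, `S` and `T ∘ S` are EP operators with closed range on a complex Hilbert
space, then `T` maps `range S` into `range S` and `S*` maps `range T` into `range T`. -/
theorem ep_product_range_invariance
    {H : Type*} [NormedAddCommGroup H] [InnerProductSpace ℂ H] [CompleteSpace H]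
    (T S : H →L[ℂ] H)
    (hT : IsClosed (LinearMap.range (T : H →ₗ[ℂ] H) : Set H))
    (hTep : LinearMap.range (T : H →ₗ[ℂ] H) = LinearMap.range (ContinuousLinearMap.adjoint T : H →ₗ[ℂ] H))
    (hS : IsClosed (LinearMap.range (S : H →ₗ[ℂ] H) : Set H))
    (hSep : LinearMap.range (S : H →ₗ[ℂ] H) = LinearMap.range (ContinuousLinearMap.adjoint S : H →ₗ[ℂ] H))
    (hTS : IsClosed (LinearMap.range (T ∘L S : H →ₗ[ℂ] H) : Set H))
    (hTSep : LinearMap.range (T ∘L S : H →ₗ[ℂ] H) =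
      LinearMap.range (ContinuousLinearMap.adjoint (T ∘L S) : H →ₗ[ℂ] H)) :
    T '' (LinearMap.range (S : H →ₗ[ℂ] H) : Set H) ⊆ (LinearMap.range (S : H →ₗ[ℂ] H) : Set H) ∧
      (ContinuousLinearMap.adjoint S) '' (LinearMap.range (T : H →ₗ[ℂ] H) : Set H) ⊆
        (LinearMap.range (T : H →ₗ[ℂ] H) : Set H) := by
  have hadj : ContinuousLinearMap.adjoint (T ∘L S)
      = ContinuousLinearMap.adjoint S ∘L ContinuousLinearMap.adjoint T :=
    ContinuousLinearMap.adjoint_comp T S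
  constructor
  · rintro y ⟨w, hw, rfl⟩
    obtain ⟨x, rfl⟩ := hw
    have h1 : T (S x) ∈ LinearMap.range (T ∘L S : H →ₗ[ℂ] H) := ⟨x, rfl⟩
    rw [hTSep, hadj] at h1
    obtain ⟨z, hz⟩ := h1
    have : T (S x) ∈ LinearMap.range (ContinuousLinearMap.adjoint S : H →ₗ[ℂ] H) :=
      ⟨ContinuousLinearMap.adjoint T z, hz⟩
    rw [← hSep] at this
    exact this
  · rintro y ⟨w, hw, rfl⟩
    have hw' : w ∈ LinearMap.range (ContinuousLinearMap.adjoint T : H →ₗ[ℂ] H) := by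
      rw [← hTep]; exact hw
    obtain ⟨z, rfl⟩ := hw'
    have h1 : ContinuousLinearMap.adjoint S (ContinuousLinearMap.adjoint T z)
        ∈ LinearMap.range (ContinuousLinearMap.adjoint (T ∘L S) : H →ₗ[ℂ] H) := by
      rw [hadj]; exact ⟨z, rfl⟩
    rw [← hTSep] at h1
    obtain ⟨x, hx⟩ := h1
    exact ⟨S x, hx⟩
end

section
/- There exist bounded linear operators T and S on the Hilbert space ℓ²(ℕ, ℂ) such that: T and S are EP with closed range; the image of range S under T is contained in range S; the image of range T under S* is contained in range T; T∘S has closed range; and yet T∘S is not EP, i.e. range (T∘S) ≠ range ((T∘S)*). (One may take S the orthogonal projection onto the closed span of the even basis vectors and T the unitary determined by e₁ ↦ e₂, e_{2j} ↦ e_{2j+2}, e_{2j+1} ↦ e_{2j-1}.) -/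
noncomputable section
open scoped ENNReal NNReal

private abbrev Hs : Type := lp (fun _ : ℕ => ℂ) 2

private def σf : ℕ → ℕ := fun n => if n % 2 = 0 then n + 2 else if n = 1 then 0 else n - 2
private def σg : ℕ → ℕ := fun n => if n = 0 then 1 else if n % 2 = 0 then n - 2 else n + 2

private def σ : Equiv.Perm ℕ :=
  ⟨σf, σg, by intro n; unfold σf σg; split_ifs <;> first | contradiction | omega,
    by intro n; unfold σf σg; split_ifs <;> first | contradiction | omega⟩

private lemma memℓp_comp_perm (e : Equiv.Perm ℕ) (f : Hs) :
    Memℓp (fun n => f (e n)) 2 := by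
  apply memℓp_gen
  exact e.summable_iff.2 ((lp.memℓp f).summable (by norm_num))

private def U : Hs ≃ₗᵢ[ℂ] Hs where
  toFun f := ⟨fun n => f (σ.symm n), memℓp_comp_perm σ.symm f⟩
  invFun f := ⟨fun n => f (σ n), memℓp_comp_perm σ f⟩
  map_add' f g := by ext n; simp [lp.coeFn_add]; rfl
  map_smul' c f := by ext n; simp [lp.coeFn_smul]
  left_inv f := by ext n; simp
  right_inv f := by ext n; simp
  norm_map' f := by
    have h2 : (0:ℝ) < (2 : ℝ≥0∞).toReal := by norm_num
    rw [lp.norm_eq_tsum_rpow h2, lp.norm_eq_tsum_rpow h2]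
    congr 1
    exact σ.symm.tsum_eq (fun i => ‖f i‖ ^ (2 : ℝ≥0∞).toReal)

private def T : Hs →L[ℂ] Hs := (U.toContinuousLinearEquiv : Hs ≃L[ℂ] Hs)
private def T' : Hs →L[ℂ] Hs := (U.symm.toContinuousLinearEquiv : Hs ≃L[ℂ] Hs)

private lemma T_apply (f : Hs) : T f = U f := rfl
private lemma T'_apply (f : Hs) : T' f = U.symm f := rfl

private lemma adjoint_T : ContinuousLinearMap.adjoint T = T' := by
  symm
  rw [ContinuousLinearMap.eq_adjoint_iff]
  intro x y
  rw [T_apply, T'_apply]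
  calc inner ℂ (U.symm x) y = inner ℂ (U (U.symm x)) (U y) := (U.inner_map_map _ _).symm
    _ = (inner ℂ x (U y) : ℂ) := by rw [U.apply_symm_apply]

private lemma range_T : LinearMap.range (T : Hs →ₗ[ℂ] Hs) = (⊤ : Submodule ℂ Hs) :=
  LinearMap.range_eq_top.2 (U.toContinuousLinearEquiv : Hs ≃L[ℂ] Hs).surjective

-- evaluation is continuous
private lemma eval_continuous (n : ℕ) : Continuous (fun f : Hs => f n) := by
  refine (LipschitzWith.of_dist_le_mul (K := 1) fun f g => ?_).continuous
  rw [NNReal.coe_one, one_mul, dist_eq_norm, dist_eq_norm]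
  calc ‖f n - g n‖ = ‖(f - g) n‖ := by rw [lp.coeFn_sub]; rfl
    _ ≤ ‖f - g‖ := lp.norm_apply_le_norm two_ne_zero _ _

private def M : Submodule ℂ Hs where
  carrier := {f | ∀ n, n % 2 = 1 → f n = 0}
  zero_mem' := fun n _ => rfl
  add_mem' := by
    intro f g hf hg n hn
    have : (↑(f + g) : ∀ _ : ℕ, ℂ) n = f n + g n := by rw [lp.coeFn_add]; rfl
    rw [this, hf n hn, hg n hn, add_zero]
  smul_mem' := by
    intro c f hf n hn
    have : (↑(c • f) : ∀ _ : ℕ, ℂ) n = c * f n := by rw [lp.coeFn_smul]; rfl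
    rw [this, hf n hn, mul_zero]

private def M0 : Submodule ℂ Hs where
  carrier := {f | ∀ n, n % 2 = 1 ∨ n = 0 → f n = 0}
  zero_mem' := fun n _ => rfl
  add_mem' := by
    intro f g hf hg n hn
    have : (↑(f + g) : ∀ _ : ℕ, ℂ) n = f n + g n := by rw [lp.coeFn_add]; rfl
    rw [this, hf n hn, hg n hn, add_zero]
  smul_mem' := by
    intro c f hf n hn
    have : (↑(c • f) : ∀ _ : ℕ, ℂ) n = c * f n := by rw [lp.coeFn_smul]; rfl
    rw [this, hf n hn, mul_zero]

private lemma isClosed_M : IsClosed (M : Set Hs) := by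
  have : (M : Set Hs) = ⋂ n : ℕ, {f : Hs | n % 2 = 1 → f n = 0} := by
    ext f; simp [M, Set.mem_iInter]; exact Iff.rfl
  rw [this]
  refine isClosed_iInter fun n => ?_
  by_cases h : n % 2 = 1
  · simp only [h, forall_true_left]
    exact isClosed_eq (eval_continuous n) continuous_const
  · have : {f : Hs | n % 2 = 1 → f n = 0} = Set.univ := by ext f; simp [h]
    rw [this]; exact isClosed_univ

private lemma isClosed_M0 : IsClosed (M0 : Set Hs) := by
  have : (M0 : Set Hs) = ⋂ n : ℕ, {f : Hs | n % 2 = 1 ∨ n = 0 → f n = 0} := by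
    ext f; simp [M0, Set.mem_iInter]; exact Iff.rfl
  rw [this]
  refine isClosed_iInter fun n => ?_
  by_cases h : n % 2 = 1 ∨ n = 0
  · simp only [h, forall_true_left]
    exact isClosed_eq (eval_continuous n) continuous_const
  · have : {f : Hs | n % 2 = 1 ∨ n = 0 → f n = 0} = Set.univ := by ext f; simp [h]
    rw [this]; exact isClosed_univ

private instance : CompleteSpace M := isClosed_M.completeSpace_coe

private def S : Hs →L[ℂ] Hs := M.subtypeL ∘L Submodule.orthogonalProjection M

private lemma S_apply (x : Hs) : S x = (Submodule.orthogonalProjection M x : Hs) := rfl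

private lemma S_apply_of_mem {x : Hs} (hx : x ∈ M) : S x = x := by
  rw [S_apply]; exact Submodule.starProjection_eq_self_iff.2 hx

private lemma range_S : LinearMap.range (S : Hs →ₗ[ℂ] Hs) = M := by
  apply le_antisymm
  · rintro _ ⟨x, rfl⟩; exact (Submodule.orthogonalProjection M x).2
  · intro x hx; exact ⟨x, S_apply_of_mem hx⟩

private lemma adjoint_S : ContinuousLinearMap.adjoint S = S :=
  (isSelfAdjoint_starProjection M).adjoint_eq

private lemma sigma_symm_apply (n : ℕ) : σ.symm n = σg n := rfl

private lemma T_mem_M0 {x : Hs} (hx : x ∈ M) : T x ∈ M0 := by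
  intro n hn
  show x (σ.symm n) = 0
  refine hx _ ?_
  rw [sigma_symm_apply]
  unfold σg; split_ifs <;> omega

private lemma range_TS : LinearMap.range (T ∘L S : Hs →ₗ[ℂ] Hs) = M0 := by
  apply le_antisymm
  · rintro _ ⟨x, rfl⟩
    exact T_mem_M0 (range_S ▸ LinearMap.mem_range_self (S : Hs →ₗ[ℂ] Hs) x : S x ∈ M)
  · intro h hh
    have hy : (U.symm h : Hs) ∈ M := by
      intro n hn
      show h (σ n) = 0
      refine hh _ ?_
      show σf n % 2 = 1 ∨ σf n = 0
      unfold σf; split_ifs <;> omega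
    refine ⟨U.symm h, ?_⟩
    show T (S (U.symm h)) = h
    rw [S_apply_of_mem hy, T_apply, U.apply_symm_apply]

private lemma range_adjoint_TS :
    LinearMap.range (ContinuousLinearMap.adjoint (T ∘L S) : Hs →ₗ[ℂ] Hs) = M := by
  rw [ContinuousLinearMap.adjoint_comp, adjoint_S, adjoint_T]
  apply le_antisymm
  · rintro _ ⟨x, rfl⟩
    exact range_S ▸ LinearMap.mem_range_self (S : Hs →ₗ[ℂ] Hs) (T' x)
  · intro x hx
    refine ⟨T x, ?_⟩
    show S (T' (T x)) = x
    rw [T'_apply, T_apply, U.symm_apply_apply, S_apply_of_mem hx]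

private def e0 : Hs := lp.single (E := fun _ : ℕ => ℂ) 2 0 (1 : ℂ)

private lemma e0_mem_M : e0 ∈ M := by
  intro n hn
  exact lp.single_apply_ne (E := fun _ : ℕ => ℂ) 2 0 (1 : ℂ) (show n ≠ 0 by omega)

private lemma e0_not_mem_M0 : e0 ∉ M0 := by
  intro h
  have h1 : e0 0 = 0 := h 0 (Or.inr rfl)
  have h2 : e0 0 = 1 := lp.single_apply_self (E := fun _ : ℕ => ℂ) 2 0 (1 : ℂ)
  rw [h1] at h2
  exact one_ne_zero h2.symm

private lemma range_T' : LinearMap.range (T' : Hs →ₗ[ℂ] Hs) = (⊤ : Submodule ℂ Hs) :=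
  LinearMap.range_eq_top.2 (U.symm.toContinuousLinearEquiv : Hs ≃L[ℂ] Hs).surjective

end

/-- There exist bounded operators `T`, `S` on `ℓ²(ℕ, ℂ)` which are EP with closed
range, such that `T` maps `range S` into `range S`, `S*` maps `range T` into
`range T`, and `T ∘ S` has closed range, yet `T ∘ S` is not EP. -/
theorem exists_ep_operators_with_non_ep_product :
    ∃ T S : lp (fun _ : ℕ => ℂ) 2 →L[ℂ] lp (fun _ : ℕ => ℂ) 2,
      IsClosed (LinearMap.range (T : lp (fun _ : ℕ => ℂ) 2 →ₗ[ℂ] lp (fun _ : ℕ => ℂ) 2) : Set (lp (fun _ : ℕ => ℂ) 2)) ∧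
      LinearMap.range (T : lp (fun _ : ℕ => ℂ) 2 →ₗ[ℂ] lp (fun _ : ℕ => ℂ) 2) = LinearMap.range (ContinuousLinearMap.adjoint T : lp (fun _ : ℕ => ℂ) 2 →ₗ[ℂ] lp (fun _ : ℕ => ℂ) 2) ∧
      IsClosed (LinearMap.range (S : lp (fun _ : ℕ => ℂ) 2 →ₗ[ℂ] lp (fun _ : ℕ => ℂ) 2) : Set (lp (fun _ : ℕ => ℂ) 2)) ∧
      LinearMap.range (S : lp (fun _ : ℕ => ℂ) 2 →ₗ[ℂ] lp (fun _ : ℕ => ℂ) 2) = LinearMap.range (ContinuousLinearMap.adjoint S : lp (fun _ : ℕ => ℂ) 2 →ₗ[ℂ] lp (fun _ : ℕ => ℂ) 2) ∧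
      T '' (LinearMap.range (S : lp (fun _ : ℕ => ℂ) 2 →ₗ[ℂ] lp (fun _ : ℕ => ℂ) 2) : Set (lp (fun _ : ℕ => ℂ) 2)) ⊆
        (LinearMap.range (S : lp (fun _ : ℕ => ℂ) 2 →ₗ[ℂ] lp (fun _ : ℕ => ℂ) 2) : Set (lp (fun _ : ℕ => ℂ) 2)) ∧
      (ContinuousLinearMap.adjoint S) '' (LinearMap.range (T : lp (fun _ : ℕ => ℂ) 2 →ₗ[ℂ] lp (fun _ : ℕ => ℂ) 2) : Set (lp (fun _ : ℕ => ℂ) 2)) ⊆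
        (LinearMap.range (T : lp (fun _ : ℕ => ℂ) 2 →ₗ[ℂ] lp (fun _ : ℕ => ℂ) 2) : Set (lp (fun _ : ℕ => ℂ) 2)) ∧
      IsClosed (LinearMap.range (T ∘L S : lp (fun _ : ℕ => ℂ) 2 →ₗ[ℂ] lp (fun _ : ℕ => ℂ) 2) : Set (lp (fun _ : ℕ => ℂ) 2)) ∧
      LinearMap.range (T ∘L S : lp (fun _ : ℕ => ℂ) 2 →ₗ[ℂ] lp (fun _ : ℕ => ℂ) 2) ≠
        LinearMap.range (ContinuousLinearMap.adjoint (T ∘L S) :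
          lp (fun _ : ℕ => ℂ) 2 →ₗ[ℂ] lp (fun _ : ℕ => ℂ) 2) := by
  refine ⟨T, S, ?_, ?_, ?_, ?_, ?_, ?_, ?_, ?_⟩
  · rw [range_T]; exact isClosed_univ
  · rw [range_T, adjoint_T, range_T']
  · rw [range_S]; exact isClosed_M
  · rw [adjoint_S]
  · rw [range_S]
    rintro _ ⟨x, hx, rfl⟩
    exact fun n hn => T_mem_M0 hx n (Or.inl hn)
  · rw [range_T]
    exact fun x _ => trivial
  · rw [range_TS]; exact isClosed_M0
  · rw [range_TS, range_adjoint_TS]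
    intro h
    exact e0_not_mem_M0 (h ▸ e0_mem_M)
end
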